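/- Let V be a finite-dimensional symplectic vector space over a field of characteristic zero, g ∈ Sp(V), and k a positive integer with 0 < k < dim V. If (g - 1)^2 = 0, then (Λ^k(g) - 1)^{k+1} = 0. -/

import Mathlib

open ExteriorAlgebra

open Finset fwdDiff in
/-- Iterated forward difference of `y ↦ c y • g`. -/
lemma aux_fwdDiff_iter_smul_const {K G : Type*} [Ring K] [AddCommGroup G] [Module K G]
    (c : ℕ → K) (g : G) (m : ℕ) :
    (Δ_[1])^[m] (fun y => c y • g) = fun y => ((Δ_[1])^[m] c y) • g := by
  induction m generalizing c with
  | zero => rfl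
  | succ m ih =>
    rw [Function.iterate_succ_apply, Function.iterate_succ_apply]
    have h1 : (Δ_[1] fun y => c y • g) = fun y => (Δ_[1] c) y • g := by
      funext y
      simp only [fwdDiff, sub_smul]
    rw [h1]
    rw [ih (Δ_[1] c)]

open Finset fwdDiff in
/-- The `m`-th forward difference of `j ↦ j^d` vanishes when `d < m`. -/
lemma aux_fwdDiff_iter_pow {K : Type*} [CommRing K] :
    ∀ d m : ℕ, d < m → (Δ_[1])^[m] (fun j : ℕ => ((j : K)) ^ d) = 0 := by
  intro d
  induction d using Nat.strong_induction_on with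
  | _ d ih =>
    intro m hm
    obtain ⟨m, rfl⟩ : ∃ m', m = m' + 1 := ⟨m - 1, by omega⟩
    rw [Function.iterate_succ_apply]
    have hΔ : Δ_[1] (fun j : ℕ => ((j : K)) ^ d)
        = ∑ i ∈ Finset.range d, fun j : ℕ => (d.choose i : K) • ((j : K)) ^ i := by
      funext j
      rw [Finset.sum_apply]
      simp only [fwdDiff, smul_eq_mul]
      rw [Nat.cast_add, Nat.cast_one, add_pow]
      rw [Finset.sum_range_succ]
      simp [mul_comm]
    rw [hΔ, fwdDiff_iter_finset_sum]
    refine Finset.sum_eq_zero fun i hi => ?_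
    have hid : i < d := Finset.mem_range.mp hi
    have : (fun j : ℕ => (d.choose i : K) • ((j:K))^i) = (d.choose i : K) • fun j : ℕ => ((j:K))^i := rfl
    rw [this, fwdDiff_iter_const_smul, ih i hid m (by omega)]
    simp

open Finset fwdDiff in
/-- `(S - 1)^m` in terms of iterated forward differences of `j ↦ S^j x`. -/
lemma aux_fwdDiff_iter_end {K G : Type*} [CommRing K] [AddCommGroup G] [Module K G]
    (S : Module.End K G) (m : ℕ) (x : G) :
    (Δ_[1])^[m] (fun j : ℕ => (S ^ j) x) = fun y => (S ^ y) (((S - 1) ^ m) x) := by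
  induction m generalizing x with
  | zero => simp
  | succ m ih =>
    rw [Function.iterate_succ_apply]
    have h1 : Δ_[1] (fun j : ℕ => (S ^ j) x) = fun j : ℕ => (S ^ j) ((S - 1) x) := by
      funext j
      simp only [fwdDiff]
      rw [pow_succ, Module.End.mul_apply, LinearMap.sub_apply, Module.End.one_apply, map_sub]
    rw [h1, ih ((S - 1) x)]
    funext y
    rw [pow_succ, Module.End.mul_apply]

/-- The endomorphism of the `k`-th exterior power induced by an endomorphism. -/
noncomputable def extPow {R M : Type*} [CommRing R] [AddCommGroup M] [Module R M]
    (k : ℕ) (f : M →ₗ[R] M) : Module.End R (⋀[R]^k M) :=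
  (ExteriorAlgebra.map f).toLinearMap.restrict (p := ⋀[R]^k M) (q := ⋀[R]^k M) (fun x hx => by
    have mono : ∀ (j : ℕ) (A B : Submodule R (ExteriorAlgebra R M)), A ≤ B → A ^ j ≤ B ^ j := by
      intro j A B h
      induction j with
      | zero => exact le_rfl
      | succ n ih => rw [pow_succ, pow_succ]; exact mul_le_mul' ih h
    have h1 : Submodule.map (ExteriorAlgebra.map f).toLinearMap (⋀[R]^k M) ≤ ⋀[R]^k M := by
      rw [exteriorPower, Submodule.map_pow, ι_range_map_map]
      refine mono _ _ _ ?_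
      rintro z hz
      obtain ⟨y, -, rfl⟩ := hz
      exact LinearMap.mem_range_self _ y
    exact h1 ⟨x, hx, rfl⟩)

open Finset fwdDiff in
/-- If $g ∈ Sp(V)$ and $(g-1)^2 = 0$, then $(Λ^k(g) - 1)^{k+1} = 0$. -/
theorem extPow_sub_one_pow_eq_zero {K V : Type*} [Field K] [CharZero K] [AddCommGroup V]
    [Module K V] [FiniteDimensional K V] (B : LinearMap.BilinForm K V)
    (hB : B.Nondegenerate) (halt : ∀ x : V, B x x = 0)
    (g : Module.End K V) (hgbij : Function.Bijective g)
    (hgB : ∀ x y : V, B (g x) (g y) = B x y)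
    (k : ℕ) (hk : 0 < k) (hk' : k < Module.finrank K V)
    (h : (g - 1) ^ 2 = 0) :
    (extPow k g - 1) ^ (k + 1) = 0 := by
  classical
  set n : Module.End K V := g - 1 with hn
  have hnn : n * n = 0 := by rw [← sq, hn]; exact h
  have hgj : ∀ j : ℕ, g ^ j = 1 + (j : K) • n := by
    intro j
    induction j with
    | zero => simp
    | succ j ih =>
      have hg1 : g = 1 + n := by rw [hn]; abel
      rw [pow_succ, ih, hg1, mul_add, mul_one, add_mul, one_mul, smul_mul_assoc, hnn,
        smul_zero, add_zero]
      push_cast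
      module
  set S : Module.End K (ExteriorAlgebra K V) := (ExteriorAlgebra.map g).toLinearMap with hS
  have hcoe : ∀ x : ⋀[K]^k V, ((extPow k g) x : ExteriorAlgebra K V) = S x := fun x => rfl
  have key : ∀ (m : ℕ) (x : ⋀[K]^k V),
      ((((extPow k g) - 1) ^ m) x : ExteriorAlgebra K V)
        = ((S - 1) ^ m) (x : ExteriorAlgebra K V) := by
    intro m
    induction m with
    | zero => intro x; simp
    | succ m ih =>
      intro x
      rw [pow_succ, Module.End.mul_apply, ih ((extPow k g - 1) x), pow_succ, Module.End.mul_apply]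
      congr 1
  have core : ∀ v : Fin k → V, ((S - 1) ^ (k + 1)) (ιMulti K k v) = 0 := by
    intro v
    have hSj : ∀ j : ℕ, (S ^ j) (ιMulti K k v) = ιMulti K k (fun i => (g ^ j) (v i)) := by
      intro j
      induction j with
      | zero => simp
      | succ j ih =>
        rw [pow_succ', Module.End.mul_apply, ih, hS, AlgHom.toLinearMap_apply, map_apply_ιMulti]
        congr 1
        funext i
        rw [Function.comp_apply, pow_succ', Module.End.mul_apply]
    have hexp : ∀ j : ℕ, (S ^ j) (ιMulti K k v)
        = ∑ s : Finset (Fin k),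
            ((j : K)) ^ s.card • ιMulti K k (s.piecewise (fun i => n (v i)) v) := by
      intro j
      rw [hSj j]
      have h1 : (fun i => (g ^ j) (v i)) = (fun i => (j : K) • n (v i)) + v := by
        funext i
        rw [hgj j]
        simp [add_comm]
      rw [h1]
      have hadd := MultilinearMap.map_add_univ
        (ιMulti K k (M := V)).toMultilinearMap (fun i => (j:K) • n (v i)) v
      refine hadd.trans (Finset.sum_congr rfl fun s _ => ?_)
      have h2 : s.piecewise (fun i => (j:K) • n (v i)) v
          = s.piecewise (fun i => (j:K) • (s.piecewise (fun i => n (v i)) v) i)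
              (s.piecewise (fun i => n (v i)) v) := by
        funext i
        by_cases hi : i ∈ s <;> simp [Finset.piecewise, hi]
      rw [h2, MultilinearMap.map_piecewise_smul]
      simp [Finset.prod_const]
    have h0 := congrFun (aux_fwdDiff_iter_end S (k+1) (ιMulti K k v)) 0
    rw [pow_zero, Module.End.one_apply] at h0
    rw [← h0]
    have hF : (fun j : ℕ => (S ^ j) (ιMulti K k v))
        = ∑ s : Finset (Fin k),
            fun j : ℕ => ((j : K)) ^ s.card • ιMulti K k (s.piecewise (fun i => n (v i)) v) := by
      funext j
      rw [hexp j, Finset.sum_apply]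
    rw [hF, fwdDiff_iter_finset_sum, Finset.sum_apply]
    refine Finset.sum_eq_zero fun s _ => ?_
    have hcard : s.card < k + 1 := by
      have := Finset.card_le_univ s
      simp only [Finset.card_univ, Fintype.card_fin] at this
      omega
    rw [aux_fwdDiff_iter_smul_const, aux_fwdDiff_iter_pow s.card (k+1) hcard]
    simp
  have hker : (⋀[K]^k V : Submodule K (ExteriorAlgebra K V))
      ≤ LinearMap.ker ((S - 1) ^ (k + 1)) := by
    rw [← ιMulti_span_fixedDegree, Submodule.span_le]
    rintro _ ⟨v, rfl⟩
    exact core v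
  refine LinearMap.ext fun x => ?_
  rw [LinearMap.zero_apply]
  have hx : ((((extPow k g) - 1) ^ (k + 1)) x : ExteriorAlgebra K V) = 0 := by
    rw [key (k+1) x]
    exact LinearMap.mem_ker.mp (hker x.2)
  exact Subtype.ext hx
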